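/- arXiv:2008.11018 — 2 statements merged into one kernel-verified Lean document; each statement's English description precedes it below -/
import Mathlib

section
/- Gårding–Maclaurin inequalities on the cone: let n ≥ 1 and 1 ≤ k ≤ n, and let λ ∈ Γ_k. Then H₁(λ) ≥ H₂(λ)^{1/2} ≥ ⋯ ≥ H_{k−1}(λ)^{1/(k−1)} ≥ H_k(λ)^{1/k} > 0, i.e., for every 1 ≤ j ≤ k−1 one has H_j(λ)^{1/j} ≥ H_{j+1}(λ)^{1/(j+1)}, and H_k(λ) > 0. -/
open Polynomial in
/-- Basic properties of `∏ (X + C a)` over a multiset of reals. -/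
lemma prodXC_props (s : Multiset ℝ) :
    ((s.map fun a => X + C a).prod).Monic ∧
    ((s.map fun a => X + C a).prod).natDegree = Multiset.card s ∧
    ((s.map fun a => X + C a).prod).roots = s.map (fun a => -a) := by
  have hmap : (s.map fun a => X + C a) = ((s.map fun a => -a).map fun a => X - C a) := by
    rw [Multiset.map_map]
    refine Multiset.map_congr rfl fun a _ => ?_
    simp [sub_neg_eq_add]
  have hmon : ((s.map fun a => X + C a).prod).Monic :=
    monic_multiset_prod_of_monic s _ fun a _ => monic_X_add_C a
  refine ⟨hmon, ?_, ?_⟩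
  · rw [natDegree_multiset_prod_of_monic _ (fun a ha => by
      obtain ⟨b, _, rfl⟩ := Multiset.mem_map.mp ha
      exact monic_X_add_C b)]
    simp [Multiset.map_map, Function.comp_def]
  · rw [hmap, roots_multiset_prod_X_sub_C]

example : True := trivial

lemma nat_choose_id (m e : ℕ) : (m + 1 - e) * (m + 1).choose e = (m + 1) * m.choose e := by
  rw [Nat.add_one_mul_choose_eq, Nat.choose_succ_right_eq, mul_comm]

open Polynomial in
/-- Derivative step: dropping to `card s - 1` numbers preserving normalized esymm. -/
lemma deriv_step (s : Multiset ℝ) (h1 : 1 ≤ Multiset.card s) :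
    ∃ t : Multiset ℝ, Multiset.card t = Multiset.card s - 1 ∧
      ∀ e ≤ Multiset.card s - 1,
        ((Multiset.card s - e : ℕ) : ℝ) * s.esymm e = (Multiset.card s : ℝ) * t.esymm e := by
  set n := Multiset.card s with hn
  set p := (s.map fun a => X + C a).prod with hp
  obtain ⟨hmon, hdeg, hroots⟩ := prodXC_props s
  rw [← hn] at hdeg
  set q := derivative p with hq
  have hcoeffq : ∀ i, q.coeff i = p.coeff (i + 1) * (i + 1) := fun i => coeff_derivative p i
  have hs1 : n - 1 + 1 = n := Nat.sub_add_cancel h1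
  have hqtop : q.coeff (n - 1) = n := by
    rw [hcoeffq, hs1, ← hdeg, hmon.coeff_natDegree, one_mul, hdeg]
    push_cast [Nat.cast_sub h1]
    ring
  have hqne : q ≠ 0 := by
    intro h
    rw [h, coeff_zero] at hqtop
    have := hqtop.symm
    norm_cast at this
    omega
  have hdegp : p.natDegree = n := by rw [hp]; exact hdeg
  have hqdeg : q.natDegree = n - 1 := by
    have h2 := natDegree_derivative_le p
    rw [← hq] at h2
    have h3 := le_natDegree_of_ne_zero (n := n - 1) (p := q) (by rw [hqtop]; positivity)
    omega
  have hrootsq : Multiset.card q.roots = n - 1 := by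
    have h2 := p.card_roots_le_derivative
    rw [← hq, hroots, Multiset.card_map, ← hn] at h2
    have h3 := q.card_roots'
    omega
  have hsplit : q.Splits := (splits_iff_card_roots).mpr (by rw [hrootsq, hqdeg])
  have hlead : q.leadingCoeff = n := by rw [leadingCoeff, hqdeg, hqtop]
  refine ⟨q.roots.map fun a => -a, by simp [hrootsq], fun e he => ?_⟩
  set t := q.roots.map fun a => -a with ht
  have hcardt : Multiset.card t = n - 1 := by simp [ht, hrootsq]
  have hfact : q = C (n : ℝ) * (t.map fun a => X + C a).prod := by
    have h4 := hsplit.eq_prod_roots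
    rw [hlead] at h4
    have h5 : (q.roots.map fun a => X - C a) = t.map fun a => X + C a := by
      rw [ht, Multiset.map_map]
      exact Multiset.map_congr rfl fun a _ => by simp [sub_eq_add_neg]
    rw [h4, h5]
  have hi : (n - 1 - e) + 1 = n - e := by omega
  have hie : (n - 1) - (n - 1 - e) = e := by omega
  have h1' : q.coeff (n - 1 - e) = s.esymm e * (n - e : ℕ) := by
    rw [hcoeffq, hi, Multiset.prod_X_add_C_coeff s (by omega : n - e ≤ Multiset.card s), ← hn]
    have hc : n - (n - e) = e := by omega
    rw [hc]
    congr 1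
    exact_mod_cast congrArg (Nat.cast : ℕ → ℝ) hi
  have h2' : q.coeff (n - 1 - e) = (n : ℝ) * t.esymm e := by
    rw [hfact, coeff_C_mul, Multiset.prod_X_add_C_coeff t (by omega : n - 1 - e ≤ Multiset.card t),
      hcardt, hie]
  rw [mul_comm ((n - e : ℕ) : ℝ) _, ← h1', h2']

lemma nat_choose_id' (n e : ℕ) (h1 : 1 ≤ n) :
    (n - e) * n.choose e = n * (n - 1).choose e := by
  obtain ⟨m, rfl⟩ : ∃ m, n = m + 1 := ⟨n - 1, by omega⟩
  simpa using nat_choose_id m e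

/-- Normalized derivative step. -/
lemma deriv_step' (s : Multiset ℝ) (h1 : 1 ≤ Multiset.card s) :
    ∃ t : Multiset ℝ, Multiset.card t = Multiset.card s - 1 ∧
      ∀ e ≤ Multiset.card s - 1,
        t.esymm e / ((Multiset.card s - 1).choose e : ℝ) =
          s.esymm e / ((Multiset.card s).choose e : ℝ) := by
  obtain ⟨t, hcard, hrel⟩ := deriv_step s h1
  refine ⟨t, hcard, fun e he => ?_⟩
  set n := Multiset.card s with hn
  have hcpos : (0:ℝ) < (n.choose e : ℝ) := by
    exact_mod_cast Nat.choose_pos (by omega : e ≤ n)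
  have hcpos' : (0:ℝ) < ((n-1).choose e : ℝ) := by
    exact_mod_cast Nat.choose_pos (by omega : e ≤ n - 1)
  rw [div_eq_div_iff hcpos'.ne' hcpos.ne']
  have hid : (n - e) * n.choose e = n * (n-1).choose e := nat_choose_id' n e h1
  have hrel' := hrel e he
  have hnpos : (0:ℝ) < n := by exact_mod_cast h1
  have key : (n : ℝ) * (t.esymm e * (n.choose e : ℝ)) = (n:ℝ) * (s.esymm e * ((n-1).choose e : ℝ)) := by
    calc (n : ℝ) * (t.esymm e * (n.choose e : ℝ))
        = ((n:ℝ) * t.esymm e) * (n.choose e : ℝ) := by ring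
      _ = (((n - e : ℕ) : ℝ) * s.esymm e) * (n.choose e : ℝ) := by rw [← hrel']
      _ = s.esymm e * (((n - e) * n.choose e : ℕ) : ℝ) := by push_cast; ring
      _ = s.esymm e * ((n * ((n-1).choose e) : ℕ) : ℝ) := by rw [hid]
      _ = (n:ℝ) * (s.esymm e * ((n-1).choose e : ℝ)) := by push_cast; ring
  exact mul_left_cancel₀ hnpos.ne' key

/-- Iterated derivative step down to `k` numbers. -/
lemma iterate_step (d : ℕ) : ∀ (s : Multiset ℝ) (k : ℕ), 1 ≤ k → Multiset.card s = k + d →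
    ∃ u : Multiset ℝ, Multiset.card u = k ∧
      ∀ e ≤ k, u.esymm e / (k.choose e : ℝ) = s.esymm e / ((k + d).choose e : ℝ) := by
  induction d with
  | zero => exact fun s k hk hcard => ⟨s, by omega, fun e he => by norm_num⟩
  | succ d ih =>
    intro s k hk hcard
    obtain ⟨t, hcardt, hrel⟩ := deriv_step' s (by omega)
    rw [hcard] at hcardt hrel
    have hreduce : k + (d + 1) - 1 = k + d := by omega
    rw [hreduce] at hcardt hrel
    obtain ⟨u, hcardu, hrelu⟩ := ih t k hk hcardt
    refine ⟨u, hcardu, fun e he => ?_⟩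
    rw [hrelu e he, hrel e (by omega)]

/-- The `k`-th elementary symmetric function of `l = (l 0, …, l (n-1)) ∈ ℝⁿ`. -/
noncomputable def esymm (n k : ℕ) (l : Fin n → ℝ) : ℝ :=
  ∑ s ∈ Finset.powersetCard k (Finset.univ : Finset (Fin n)), ∏ i ∈ s, l i

/-- The normalized `k`-th mean curvature function `H_k(λ) = σ_k(λ) / C(n,k)`. -/
noncomputable def meanH (n k : ℕ) (l : Fin n → ℝ) : ℝ :=
  esymm n k l / (n.choose k : ℝ)

lemma esymm_eq_multiset (n k : ℕ) (l : Fin n → ℝ) :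
    esymm n k l = ((Finset.univ.val.map l : Multiset ℝ)).esymm k :=
  (Finset.esymm_map_val l Finset.univ k).symm

lemma card_univ_map (n : ℕ) (l : Fin n → ℝ) :
    Multiset.card (Finset.univ.val.map l : Multiset ℝ) = n := by
  simp

lemma list_aux (m : ℕ) (L : List ℝ) (h : m = L.length) :
    (List.finRange m).map (fun i => L.get (Fin.cast h i)) = L := by
  subst h
  exact List.map_get_finRange L

/-- Every multiset of reals arises from a function on `Fin (card s)`. -/
lemma exists_fn (s : Multiset ℝ) :
    ∃ f : Fin (Multiset.card s) → ℝ, (Finset.univ.val.map f : Multiset ℝ) = s := by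
  have h : Multiset.card s = s.toList.length := (Multiset.length_toList s).symm
  refine ⟨fun i => s.toList.get (Fin.cast h i), ?_⟩
  have huniv : (Finset.univ.val : Multiset (Fin (Multiset.card s))) =
      ↑(List.finRange (Multiset.card s)) := by rw [Fin.univ_def]
  rw [huniv]
  rw [show (Multiset.map (fun i => s.toList.get (Fin.cast h i)) ↑(List.finRange (Multiset.card s)))
      = ↑((List.finRange (Multiset.card s)).map (fun i => s.toList.get (Fin.cast h i))) from rfl]
  rw [list_aux _ _ h, Multiset.coe_toList]

lemma esymm_pred (m : ℕ) (hm : 1 ≤ m) (f : Fin m → ℝ) :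
    esymm m (m - 1) f = ∑ i : Fin m, ∏ j ∈ Finset.univ.erase i, f j := by
  rw [esymm]
  refine (Finset.sum_bij (fun (i : Fin m) _ => (Finset.univ.erase i : Finset (Fin m)))
    ?_ ?_ ?_ ?_).symm
  · intro a _
    rw [Finset.mem_powersetCard]
    refine ⟨Finset.erase_subset _ _, ?_⟩
    rw [Finset.card_erase_of_mem (Finset.mem_univ a), Finset.card_univ, Fintype.card_fin]
  · intro a₁ _ a₂ _ h
    by_contra hne
    have h2 : a₁ ∈ Finset.univ.erase a₂ := Finset.mem_erase.mpr ⟨hne, Finset.mem_univ _⟩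
    rw [← h] at h2
    exact (Finset.mem_erase.mp h2).1 rfl
  · intro t ht
    rw [Finset.mem_powersetCard] at ht
    have hc : (tᶜ).card = 1 := by
      rw [Finset.card_compl, ht.2, Fintype.card_fin]
      omega
    obtain ⟨i, hi⟩ := Finset.card_eq_one.mp hc
    refine ⟨i, Finset.mem_univ i, ?_⟩
    have hisub : t ⊆ Finset.univ.erase i := by
      intro x hx
      refine Finset.mem_erase.mpr ⟨fun hxi => ?_, Finset.mem_univ x⟩
      have hxc : x ∈ tᶜ := by rw [hi]; exact Finset.mem_singleton.mpr hxi
      exact (Finset.mem_compl.mp hxc) hx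
    refine (Finset.eq_of_subset_of_card_le hisub ?_).symm
    rw [Finset.card_erase_of_mem (Finset.mem_univ i), Finset.card_univ, Fintype.card_fin, ht.2]
  · intro a _
    rfl

lemma prod_erase_pair (m : ℕ) (f : Fin m → ℝ) (i j : Fin m) (hij : i ≠ j) :
    (∏ l ∈ Finset.univ.erase i, f l) * ∏ l ∈ Finset.univ.erase j, f l =
      (∏ l, f l) * ∏ l ∈ Finset.univ \ {i, j}, f l := by
  set R := (Finset.univ \ {i, j} : Finset (Fin m)) with hR
  have hiR : i ∉ R := by simp [hR]
  have hjR : j ∉ R := by simp [hR]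
  have h1 : Finset.univ.erase i = insert j R := by
    ext x
    simp only [Finset.mem_erase, Finset.mem_univ, and_true, Finset.mem_insert, hR,
      Finset.mem_sdiff, Finset.mem_singleton, true_and]
    constructor
    · intro hx
      by_cases h : x = j
      · exact Or.inl h
      · exact Or.inr (by simp [hx, h])
    · rintro (rfl | hx)
      · exact hij.symm
      · simp at hx
        exact hx.1
  have h2 : Finset.univ.erase j = insert i R := by
    ext x
    simp only [Finset.mem_erase, Finset.mem_univ, and_true, Finset.mem_insert, hR,
      Finset.mem_sdiff, Finset.mem_singleton, true_and]
    constructor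
    · intro hx
      by_cases h : x = i
      · exact Or.inl h
      · exact Or.inr (by simp [hx, h])
    · rintro (rfl | hx)
      · exact hij
      · simp at hx
        exact hx.2
  have h3 : (Finset.univ : Finset (Fin m)) = insert i (insert j R) := by
    ext x
    simp only [Finset.mem_univ, true_iff, Finset.mem_insert, hR, Finset.mem_sdiff,
      Finset.mem_singleton, true_and]
    by_cases hxi : x = i
    · exact Or.inl hxi
    by_cases hxj : x = j
    · exact Or.inr (Or.inl hxj)
    · exact Or.inr (Or.inr (by simp [hxi, hxj]))
  rw [h1, h2, Finset.prod_insert hjR, Finset.prod_insert hiR, h3,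
    Finset.prod_insert (by simp [hiR, hij] : i ∉ insert j R), Finset.prod_insert hjR]
  ring

lemma esymm_top_mul (m : ℕ) (hm : 2 ≤ m) (f : Fin m → ℝ) :
    esymm m m f * esymm m (m - 2) f =
      ∑ t ∈ Finset.powersetCard 2 (Finset.univ : Finset (Fin m)),
        ∏ i ∈ t, ∏ j ∈ Finset.univ.erase i, f j := by
  have hps : Finset.powersetCard m (Finset.univ : Finset (Fin m)) = {Finset.univ} := by
    have h := Finset.powersetCard_self (Finset.univ : Finset (Fin m))
    rwa [Finset.card_univ, Fintype.card_fin] at h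
  have htop : esymm m m f = ∏ j, f j := by
    rw [esymm, hps, Finset.sum_singleton]
  rw [htop, esymm, Finset.mul_sum]
  refine (Finset.sum_bij (fun (t : Finset (Fin m)) _ => (tᶜ : Finset (Fin m))) ?_ ?_ ?_ ?_).symm
  · intro t ht
    rw [Finset.mem_powersetCard] at ht ⊢
    refine ⟨Finset.subset_univ _, ?_⟩
    rw [Finset.card_compl, ht.2, Fintype.card_fin]
  · intro a₁ _ a₂ _ h
    exact compl_injective h
  · intro u hu
    refine ⟨uᶜ, ?_, by simp⟩
    rw [Finset.mem_powersetCard] at hu ⊢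
    refine ⟨Finset.subset_univ _, ?_⟩
    rw [Finset.card_compl, hu.2, Fintype.card_fin]
    omega
  · intro t ht
    rw [Finset.mem_powersetCard] at ht
    obtain ⟨i, j, hij, rfl⟩ := Finset.card_eq_two.mp ht.2
    rw [Finset.prod_pair hij, prod_erase_pair m f i j hij]
    congr 1

lemma sum_powersetCard_two (m : ℕ) (g : Fin m → ℝ) :
    2 * ∑ t ∈ Finset.powersetCard 2 (Finset.univ : Finset (Fin m)), ∏ i ∈ t, g i =
      (∑ i, g i) ^ 2 - ∑ i, (g i) ^ 2 := by
  have hsq : (∑ i, g i) ^ 2 = ∑ p ∈ Finset.univ ×ˢ Finset.univ, g p.1 * g p.2 := by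
    rw [sq, Finset.sum_mul_sum, ← Finset.sum_product']
  have hsplit := Finset.sum_filter_add_sum_filter_not
    (Finset.univ ×ˢ Finset.univ : Finset (Fin m × Fin m)) (fun p => p.1 = p.2)
    (fun p => g p.1 * g p.2)
  have hdiag : ∑ p ∈ (Finset.univ ×ˢ Finset.univ : Finset (Fin m × Fin m)).filter
      (fun p => p.1 = p.2), g p.1 * g p.2 = ∑ i, (g i) ^ 2 := by
    refine Finset.sum_bij (fun p _ => p.1) ?_ ?_ ?_ ?_
    · intro p _
      exact Finset.mem_univ _
    · intro p hp q hq h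
      rw [Finset.mem_filter] at hp hq
      have hp2 : p.1 = p.2 := hp.2
      have hq2 : q.1 = q.2 := hq.2
      exact Prod.ext h (by rw [← hp2, ← hq2]; exact h)
    · intro i _
      exact ⟨(i, i), Finset.mem_filter.mpr ⟨by simp, rfl⟩, rfl⟩
    · intro p hp
      rw [Finset.mem_filter] at hp
      have hp2 : p.1 = p.2 := hp.2
      rw [← hp2, sq]
  have hoff : ∑ p ∈ (Finset.univ ×ˢ Finset.univ : Finset (Fin m × Fin m)).filter
      (fun p => ¬p.1 = p.2), g p.1 * g p.2 =
      2 * ∑ t ∈ Finset.powersetCard 2 (Finset.univ : Finset (Fin m)), ∏ i ∈ t, g i := by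
    have hmapsto : ∀ p ∈ (Finset.univ ×ˢ Finset.univ : Finset (Fin m × Fin m)).filter
        (fun p => ¬p.1 = p.2), ({p.1, p.2} : Finset (Fin m)) ∈
        Finset.powersetCard 2 (Finset.univ : Finset (Fin m)) := by
      intro p hp
      rw [Finset.mem_filter] at hp
      have hp2 : ¬p.1 = p.2 := hp.2
      rw [Finset.mem_powersetCard]
      exact ⟨Finset.subset_univ _, Finset.card_pair hp2⟩
    rw [← Finset.sum_fiberwise_of_maps_to hmapsto (fun p => g p.1 * g p.2)]
    rw [Finset.mul_sum]
    refine Finset.sum_congr rfl fun t ht => ?_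
    rw [Finset.mem_powersetCard] at ht
    obtain ⟨i, j, hij, rfl⟩ := Finset.card_eq_two.mp ht.2
    have hfib : (((Finset.univ ×ˢ Finset.univ : Finset (Fin m × Fin m)).filter
        (fun p => ¬p.1 = p.2)).filter (fun p => ({p.1, p.2} : Finset (Fin m)) = {i, j})) =
        {(i, j), (j, i)} := by
      ext p
      simp only [Finset.mem_filter, Finset.mem_product, Finset.mem_univ, true_and,
        Finset.mem_insert, Finset.mem_singleton, Prod.ext_iff]
      constructor
      · rintro ⟨hne, hset⟩
        have hset2 : ({p.1, p.2} : Set (Fin m)) = {i, j} := by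
          have h2 := congrArg (fun (u : Finset (Fin m)) => (u : Set (Fin m))) hset
          simpa using h2
        rcases Set.pair_eq_pair_iff.mp hset2 with ⟨h1, h2⟩ | ⟨h1, h2⟩
        · exact Or.inl ⟨h1, h2⟩
        · exact Or.inr ⟨h1, h2⟩
      · rintro (⟨h1, h2⟩ | ⟨h1, h2⟩)
        · subst h1; subst h2
          exact ⟨hij, rfl⟩
        · subst h1; subst h2
          exact ⟨hij.symm, by rw [Finset.pair_comm]⟩
    rw [hfib, Finset.sum_pair (by simp [hij, Prod.ext_iff] : ((i, j) : Fin m × Fin m) ≠ (j, i)),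
      Finset.prod_pair hij]
    ring
  rw [hsq, ← hsplit, hdiag, hoff]
  ring

/-- Endpoint case of Newton's inequality. -/
lemma endpoint (m : ℕ) (hm : 2 ≤ m) (f : Fin m → ℝ) :
    2 * (m:ℝ) * (esymm m m f * esymm m (m-2) f) ≤ ((m:ℝ) - 1) * (esymm m (m-1) f)^2 := by
  have h1 : esymm m (m-1) f = ∑ i, ∏ j ∈ Finset.univ.erase i, f j := esymm_pred m (by omega) f
  have h2 := esymm_top_mul m hm f
  have h3 := sum_powersetCard_two m (fun i => ∏ j ∈ Finset.univ.erase i, f j)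
  have h4 : (∑ i, ∏ j ∈ Finset.univ.erase i, f j)^2 ≤
      (m:ℝ) * ∑ i, (∏ j ∈ Finset.univ.erase i, f j)^2 := by
    have h5 := sq_sum_le_card_mul_sum_sq (s := (Finset.univ : Finset (Fin m)))
      (f := fun i => ∏ j ∈ Finset.univ.erase i, f j)
    simpa using h5
  rw [h1, h2]
  have h6 := congrArg (fun x : ℝ => (m:ℝ) * x) h3
  linarith [h4, h6]

lemma exists_fn' (n : ℕ) (s : Multiset ℝ) (h : Multiset.card s = n) :
    ∃ f : Fin n → ℝ, (Finset.univ.val.map f : Multiset ℝ) = s := by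
  subst h
  exact exists_fn s

/-- Newton's inequality for normalized elementary symmetric means of reals. -/
lemma newton_s3 (s : Multiset ℝ) (j : ℕ) (hj : j + 2 ≤ Multiset.card s) :
    (s.esymm j / ((Multiset.card s).choose j : ℝ)) *
      (s.esymm (j+2) / ((Multiset.card s).choose (j+2) : ℝ)) ≤
    (s.esymm (j+1) / ((Multiset.card s).choose (j+1) : ℝ))^2 := by
  obtain ⟨u, hcardu, hrel⟩ :=
    iterate_step (Multiset.card s - (j+2)) s (j+2) (by omega) (by omega)
  rw [show (j+2) + (Multiset.card s - (j+2)) = Multiset.card s from by omega] at hrel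
  rw [← hrel j (by omega), ← hrel (j+1) (by omega), ← hrel (j+2) (by omega)]
  obtain ⟨f, hf⟩ := exists_fn' (j+2) u hcardu
  have hesymm : ∀ e, u.esymm e = esymm (j+2) e f := fun e =>
    ((esymm_eq_multiset (j+2) e f).trans (by rw [hf])).symm
  have hend := endpoint (j+2) (by omega) f
  rw [show j+2-1 = j+1 from rfl, show j+2-2 = j from rfl] at hend
  rw [hesymm j, hesymm (j+1), hesymm (j+2)]
  have hCj : (((j+2).choose j : ℕ) : ℝ) = ((j:ℝ)+2)*((j:ℝ)+1)/2 := by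
    have h1 : (j+2).choose j = (j+2).choose 2 := by
      have := Nat.choose_symm (show 2 ≤ j + 2 by omega)
      simpa using this
    rw [h1, Nat.cast_choose_two]
    push_cast
    ring
  have hCj1 : (((j+2).choose (j+1) : ℕ) : ℝ) = (j:ℝ)+2 := by
    have h1 : (j+2).choose (j+1) = (j+2).choose 1 := by
      have := Nat.choose_symm (show 1 ≤ j + 2 by omega)
      simpa using this
    rw [h1, Nat.choose_one_right]
    push_cast
    ring
  have hCj2 : (((j+2).choose (j+2) : ℕ) : ℝ) = 1 := by
    rw [Nat.choose_self, Nat.cast_one]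
  rw [hCj, hCj1, hCj2, div_one]
  rw [div_mul_eq_mul_div, div_pow, div_le_div_iff₀ (by positivity) (by positivity)]
  push_cast at hend
  have hmul := mul_le_mul_of_nonneg_left hend (show (0:ℝ) ≤ ((j:ℝ)+2)/2 by positivity)
  nlinarith [hmul]

open Polynomial in
/-- If all esymm are nonneg and the top one positive, all elements are positive. -/
lemma elements_pos (u : Multiset ℝ) (h0 : ∀ e ≤ Multiset.card u, 0 ≤ u.esymm e)
    (htop : 0 < u.esymm (Multiset.card u)) : ∀ a ∈ u, 0 < a := by
  intro a ha
  by_contra hle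
  push_neg at hle
  set p := (u.map fun b => X + C b).prod with hp
  obtain ⟨hmon, hdeg, _⟩ := prodXC_props u
  set x := -a with hx
  have hx0 : 0 ≤ x := by simp [hx]; linarith
  have heval0 : p.eval x = 0 := by
    rw [hp, eval_multiset_prod, Multiset.map_map]
    apply Multiset.prod_eq_zero
    rw [Multiset.mem_map]
    exact ⟨a, ha, by simp [hx]⟩
  have hevalpos : 0 < p.eval x := by
    rw [eval_eq_sum_range]
    have hdeg' : p.natDegree = Multiset.card u := by rw [hp]; exact hdeg
    apply Finset.sum_pos'
    · intro i hi
      rw [Finset.mem_range] at hi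
      have hic : i ≤ Multiset.card u := by omega
      rw [hdeg'] at hi
      rw [hp, Multiset.prod_X_add_C_coeff u hic]
      exact mul_nonneg (h0 _ (by omega)) (pow_nonneg hx0 i)
    · refine ⟨0, Finset.mem_range.mpr (by rw [hdeg']; omega), ?_⟩
      rw [hp, Multiset.prod_X_add_C_coeff u (by omega : 0 ≤ Multiset.card u)]
      simpa using htop
  rw [heval0] at hevalpos
  exact lt_irrefl 0 hevalpos

/-- esymm of a multiset of positive reals is positive. -/
lemma esymm_pos_of_pos (u : Multiset ℝ) (hpos : ∀ a ∈ u, 0 < a) (e : ℕ)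
    (he : e ≤ Multiset.card u) : 0 < u.esymm e := by
  obtain ⟨f, hf⟩ := exists_fn u
  have hesymm : esymm (Multiset.card u) e f = u.esymm e :=
    (esymm_eq_multiset _ _ _).trans (congrArg (fun s => Multiset.esymm s e) hf)
  rw [← hesymm, esymm]
  apply Finset.sum_pos
  · intro t ht
    apply Finset.prod_pos
    intro i _
    apply hpos
    rw [← hf]
    exact Multiset.mem_map.mpr ⟨i, Finset.mem_univ i, rfl⟩
  · apply Finset.powersetCard_nonempty.mpr
    rw [Finset.card_univ, Fintype.card_fin]
    exact he

lemma multiset_esymm_zero (u : Multiset ℝ) : u.esymm 0 = 1 := by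
  simp [Multiset.esymm, Multiset.powersetCard_zero_left]

/-- Key: nonneg esymms up to k plus positive k-th esymm force positivity. -/
lemma key_pos (n k : ℕ) (hk1 : 1 ≤ k) (hk : k ≤ n) (l : Fin n → ℝ)
    (hnn : ∀ j, 1 ≤ j → j ≤ k → 0 ≤ esymm n j l) (hkpos : 0 < esymm n k l) :
    ∀ j, 1 ≤ j → j ≤ k → 0 < esymm n j l := by
  have hes : ∀ j, esymm n j l = (Finset.univ.val.map l : Multiset ℝ).esymm j := fun j =>
    esymm_eq_multiset n j l
  set s := (Finset.univ.val.map l : Multiset ℝ) with hs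
  have hcard : Multiset.card s = n := card_univ_map n l
  obtain ⟨u, hcardu, hrel⟩ := iterate_step (n - k) s k hk1 (by omega)
  rw [show k + (n - k) = n from by omega] at hrel
  have hckpos : ∀ e, e ≤ k → (0:ℝ) < (k.choose e : ℝ) := fun e he => by
    exact_mod_cast Nat.choose_pos he
  have hcnpos : ∀ e, e ≤ n → (0:ℝ) < (n.choose e : ℝ) := fun e he => by
    exact_mod_cast Nat.choose_pos he
  have hueq : ∀ e, e ≤ k → u.esymm e = (k.choose e : ℝ) * (s.esymm e / (n.choose e : ℝ)) := by
    intro e he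
    rw [← hrel e he, mul_comm, div_mul_cancel₀ _ (hckpos e he).ne']
  have hun : ∀ e ≤ Multiset.card u, 0 ≤ u.esymm e := by
    intro e he
    rw [hcardu] at he
    rcases Nat.eq_zero_or_pos e with rfl | he1
    · rw [multiset_esymm_zero]; norm_num
    · rw [hueq e he]
      apply mul_nonneg (hckpos e he).le
      apply div_nonneg _ (Nat.cast_nonneg _)
      rw [← hes]
      exact hnn e he1 he
  have hutop : 0 < u.esymm (Multiset.card u) := by
    rw [hcardu, hueq k le_rfl]
    apply mul_pos (hckpos k le_rfl)
    apply div_pos _ (hcnpos k hk)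
    rw [← hes]
    exact hkpos
  have hel := elements_pos u hun hutop
  intro j hj1 hjk
  rw [hes]
  have hupos : 0 < u.esymm j := esymm_pos_of_pos u hel j (by omega)
  rw [hueq j hjk] at hupos
  have h2 : 0 < s.esymm j / (n.choose j : ℝ) := by
    by_contra hcon
    push_neg at hcon
    nlinarith [hckpos j hjk]
  have h3 := mul_pos h2 (hcnpos j (le_trans hjk hk))
  rwa [div_mul_cancel₀ _ (hcnpos j (le_trans hjk hk)).ne'] at h3

lemma esymm_continuous (n j : ℕ) : Continuous fun l : Fin n → ℝ => esymm n j l := by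
  unfold esymm
  exact continuous_finset_sum _ fun t _ => continuous_finset_prod _ fun i _ => continuous_apply i

lemma esymm_ones (n j : ℕ) (h : j ≤ n) :
    esymm n j (fun _ => 1) = (n.choose j : ℝ) := by
  rw [esymm]
  simp only [Finset.prod_const_one, Finset.sum_const, nsmul_eq_mul, mul_one]
  rw [Finset.card_powersetCard, Finset.card_univ, Fintype.card_fin]

lemma esymm_fin_zero (n : ℕ) (l : Fin n → ℝ) : esymm n 0 l = 1 := by
  rw [esymm]
  simp [Finset.powersetCard_zero]

lemma meanH_zero (n : ℕ) (l : Fin n → ℝ) : meanH n 0 l = 1 := by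
  rw [meanH, esymm_fin_zero]
  simp

/-- The Gårding cone `Γ_k ⊆ ℝⁿ`: the connected component of `{λ : σ_k(λ) > 0}`
containing the vector `(1,…,1)`. -/
noncomputable def gardingCone (n k : ℕ) : Set (Fin n → ℝ) :=
  connectedComponentIn {l : Fin n → ℝ | 0 < esymm n k l} (fun _ => 1)

/-- Gårding–Maclaurin inequalities on the cone: for `λ ∈ Γ_k`,
`H₁(λ) ≥ H₂(λ)^{1/2} ≥ ⋯ ≥ H_k(λ)^{1/k} > 0`, i.e. for `1 ≤ j ≤ k-1` one has
`H_j(λ)^{1/j} ≥ H_{j+1}(λ)^{1/(j+1)}`, and `H_k(λ) > 0`. -/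
theorem garding_maclaurin (n k : ℕ) (hn : 1 ≤ n) (hk1 : 1 ≤ k) (hk : k ≤ n)
    (l : Fin n → ℝ) (hl : l ∈ gardingCone n k) :
    (∀ j, 1 ≤ j → j ≤ k - 1 →
      meanH n (j + 1) l ^ ((1 : ℝ) / (j + 1)) ≤ meanH n j l ^ ((1 : ℝ) / j)) ∧
    0 < meanH n k l := by
  classical
  set S : Set (Fin n → ℝ) := {l | 0 < esymm n k l} with hSdef
  set U : Set (Fin n → ℝ) := {l | ∀ j, 1 ≤ j → j ≤ k → 0 < esymm n j l} with hUdef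
  have hUopen : IsOpen U := by
    have hU2 : U = ⋂ j ∈ Set.Icc 1 k, {l : Fin n → ℝ | 0 < esymm n j l} := by
      ext l
      simp [hUdef, Set.mem_Icc, and_imp]
    rw [hU2]
    exact (Set.finite_Icc 1 k).isOpen_biInter fun j _ =>
      isOpen_lt continuous_const (esymm_continuous n j)
  have hNclosed : IsClosed {l : Fin n → ℝ | ∀ j, 1 ≤ j → j ≤ k → 0 ≤ esymm n j l} := by
    have hN2 : {l : Fin n → ℝ | ∀ j, 1 ≤ j → j ≤ k → 0 ≤ esymm n j l} =
        ⋂ j ∈ Set.Icc 1 k, {l : Fin n → ℝ | 0 ≤ esymm n j l} := by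
      ext l
      simp [Set.mem_Icc, and_imp]
    rw [hN2]
    exact isClosed_biInter fun j _ =>
      isClosed_le continuous_const (esymm_continuous n j)
  have hclosureU : closure U ⊆ {l : Fin n → ℝ | ∀ j, 1 ≤ j → j ≤ k → 0 ≤ esymm n j l} :=
    closure_minimal (fun l hl j h1 h2 => (hl j h1 h2).le) hNclosed
  have hbaseU : (fun _ => (1:ℝ)) ∈ U := by
    intro j h1 h2
    rw [esymm_ones n j (le_trans h2 hk)]
    exact_mod_cast Nat.choose_pos (le_trans h2 hk)
  have hbaseS : (fun _ => (1:ℝ)) ∈ S := by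
    show 0 < esymm n k (fun _ => 1)
    rw [esymm_ones n k hk]
    exact_mod_cast Nat.choose_pos hk
  have hCsub : gardingCone n k ⊆ U := by
    have hpre : IsPreconnected (gardingCone n k) := isPreconnected_connectedComponentIn
    have hsub2 : gardingCone n k ⊆ U ∪ (closure U)ᶜ := by
      intro x hx
      have hxS : x ∈ S := connectedComponentIn_subset _ _ hx
      by_cases hcl : x ∈ closure U
      · exact Or.inl (key_pos n k hk1 hk x (hclosureU hcl) hxS)
      · exact Or.inr hcl
    have hdisj : Disjoint U (closure U)ᶜ :=
      Set.disjoint_left.mpr fun x hxU hxc => hxc (subset_closure hxU)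
    have hne : (gardingCone n k ∩ U).Nonempty :=
      ⟨fun _ => 1, mem_connectedComponentIn hbaseS, hbaseU⟩
    exact hpre.subset_left_of_subset_union hUopen isClosed_closure.isOpen_compl hdisj hsub2 hne
  have hl' := hCsub hl
  have hH : ∀ j, j ≤ k → 0 < meanH n j l := by
    intro j hj
    rcases Nat.eq_zero_or_pos j with rfl | hj1
    · rw [meanH_zero]; norm_num
    · rw [meanH]
      exact div_pos (hl' j hj1 hj)
        (by exact_mod_cast Nat.choose_pos (le_trans hj hk))
  have hNewton : ∀ i, i + 2 ≤ k → meanH n i l * meanH n (i+2) l ≤ meanH n (i+1) l ^ 2 := by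
    intro i hi
    have hnew := newton_s3 (Finset.univ.val.map l) i (by rw [card_univ_map]; omega)
    rw [card_univ_map] at hnew
    simp only [meanH, esymm_eq_multiset]
    exact hnew
  have hchain : ∀ j, 1 ≤ j → j ≤ k - 1 → meanH n (j+1) l ^ j ≤ meanH n j l ^ (j+1) := by
    intro j
    induction j with
    | zero => omega
    | succ j ih =>
      intro _ hjk
      rcases Nat.eq_zero_or_pos j with rfl | hj1
      · have hnew := hNewton 0 (by omega)
        rw [meanH_zero, one_mul] at hnew
        simpa using hnew
      · have hB := ih hj1 (by omega)
        have hA := hNewton j (by omega)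
        have hp1 : 0 < meanH n j l := hH j (by omega)
        have hp2 : 0 < meanH n (j+1) l := hH (j+1) (by omega)
        have hp3 : 0 < meanH n (j+2) l := hH (j+2) (by omega)
        have hA' : meanH n (j+2) l ≤ meanH n (j+1) l^2 / meanH n j l := by
          rw [le_div_iff₀ hp1]
          nlinarith [hA]
        calc meanH n (j+1+1) l ^ (j+1)
            ≤ (meanH n (j+1) l^2 / meanH n j l) ^ (j+1) := pow_le_pow_left₀ hp3.le hA' _
          _ = meanH n (j+1) l^(2*(j+1)) / meanH n j l^(j+1) := by rw [div_pow, ← pow_mul]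
          _ ≤ meanH n (j+1) l^(2*(j+1)) / meanH n (j+1) l^j := by
              rw [div_le_div_iff_of_pos_left (pow_pos hp2 _) (pow_pos hp1 _) (pow_pos hp2 _)]
              exact hB
          _ = meanH n (j+1) l^(j+1+1) := by
              rw [show 2*(j+1) = (j+2) + j from by ring, pow_add, mul_div_assoc,
                div_self (pow_ne_zero _ hp2.ne'), mul_one]
  refine ⟨?_, hH k le_rfl⟩
  intro j hj1 hjk
  have hch := hchain j hj1 hjk
  have ha : 0 < meanH n j l := hH j (by omega)
  have hb : 0 < meanH n (j+1) l := hH (j+1) (by omega)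
  have hNne : j * (j+1) ≠ 0 := by positivity
  apply le_of_pow_le_pow_left₀ hNne (Real.rpow_pos_of_pos ha _).le
  rw [← Real.rpow_natCast (meanH n (j+1) l ^ ((1:ℝ)/(j+1))) (j*(j+1)),
    ← Real.rpow_natCast (meanH n j l ^ ((1:ℝ)/j)) (j*(j+1)),
    ← Real.rpow_mul hb.le, ← Real.rpow_mul ha.le]
  have he1 : ((1:ℝ)/(j+1)) * ((j*(j+1) : ℕ) : ℝ) = (j : ℕ) := by
    push_cast
    field_simp
  have he2 : ((1:ℝ)/j) * ((j*(j+1) : ℕ) : ℝ) = ((j+1 : ℕ) : ℝ) := by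
    have hj0 : (j:ℝ) ≠ 0 := Nat.cast_ne_zero.mpr (by omega)
    push_cast
    field_simp
  rw [he1, he2, Real.rpow_natCast, Real.rpow_natCast]
  exact hch
end

section
/- Let n ≥ 1, 1 ≤ k ≤ n, and let A be a real symmetric n×n matrix whose vector of eigenvalues λ(A) = (λ₁,…,λₙ) belongs to the Gårding cone Γ_k. Then the Newton transformation P_{k−1}(A) is positive definite. -/
open Matrix

/-- The Newton transformations associated to a matrix `A` and a sequence `σ` of scalars
(to be taken as the elementary symmetric functions of the eigenvalues of `A`):
`P₀ = I`, `P_k = σ_k • I - A * P_{k-1}`. -/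
noncomputable def newton {n : ℕ} (A : Matrix (Fin n) (Fin n) ℝ) (σ : ℕ → ℝ) :
    ℕ → Matrix (Fin n) (Fin n) ℝ
  | 0 => 1
  | k + 1 => σ (k + 1) • (1 : Matrix (Fin n) (Fin n) ℝ) - A * newton A σ k

namespace GardingAux

open Polynomial


lemma multiset_sum_pos {s : Multiset ℝ} (h : ∀ x ∈ s, 0 < x) (hs : s ≠ 0) : 0 < s.sum := by
  induction s using Multiset.induction with
  | empty => simp at hs
  | cons a t ih =>
    rw [Multiset.sum_cons]
    rcases eq_or_ne t 0 with rfl | ht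
    · simpa using h a (by simp)
    · exact add_pos (h a (by simp)) (ih (fun x hx => h x (Multiset.mem_cons_of_mem hx)) ht)

lemma esymm_pos {s : Multiset ℝ} (h : ∀ x ∈ s, 0 < x) {p : ℕ} (hp : p ≤ Multiset.card s) :
    0 < s.esymm p := by
  apply multiset_sum_pos
  · intro x hx
    rw [Multiset.mem_map] at hx
    obtain ⟨t, ht, rfl⟩ := hx
    rw [Multiset.mem_powersetCard] at ht
    exact Multiset.prod_pos fun a ha => h a (Multiset.mem_of_le ht.1 ha)
  · intro h0
    have h1 := congrArg Multiset.card h0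
    simp only [Multiset.card_map, Multiset.card_powersetCard, Multiset.card_zero] at h1
    exact (Nat.choose_pos hp).ne' h1

lemma esymm_zero' (s : Multiset ℝ) : s.esymm 0 = 1 := by
  simp [Multiset.esymm, Multiset.powersetCard_zero_left]

lemma esymm_of_card_lt {s : Multiset ℝ} {p : ℕ} (h : Multiset.card s < p) : s.esymm p = 0 := by
  simp [Multiset.esymm, Multiset.powersetCard_eq_empty _ h]

lemma esymm_cons (a : ℝ) (s : Multiset ℝ) (p : ℕ) :
    (a ::ₘ s).esymm (p + 1) = s.esymm (p + 1) + a * s.esymm p := by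
  rw [Multiset.esymm, Multiset.powersetCard_cons, Multiset.map_add, Multiset.sum_add,
    Multiset.map_map]
  congr 1
  rw [Multiset.esymm, ← Multiset.sum_map_mul_left]
  apply congrArg
  apply Multiset.map_congr rfl
  intro t _
  simp [Multiset.prod_cons]

noncomputable def mpoly (s : Multiset ℝ) : ℝ[X] := (s.map fun r => X + C r).prod

lemma mpoly_monic (s : Multiset ℝ) : (mpoly s).Monic :=
  monic_multiset_prod_of_monic _ _ fun i _ => monic_X_add_C i

lemma mpoly_natDegree (s : Multiset ℝ) : (mpoly s).natDegree = Multiset.card s := by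
  rw [mpoly, natDegree_multiset_prod_of_monic]
  · simp [Multiset.map_map, Function.comp_def, natDegree_X_add_C]
  · intro f hf
    rw [Multiset.mem_map] at hf
    obtain ⟨r, _, rfl⟩ := hf
    exact monic_X_add_C r

lemma mpoly_coeff (s : Multiset ℝ) {j : ℕ} (hj : j ≤ Multiset.card s) :
    (mpoly s).coeff j = s.esymm (Multiset.card s - j) :=
  Multiset.prod_X_add_C_coeff s hj

lemma mpoly_roots (s : Multiset ℝ) : (mpoly s).roots = s.map (fun x => -x) := by
  have h : mpoly s = ((s.map fun x => -x).map fun a => X - C a).prod := by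
    rw [Multiset.map_map, mpoly]
    exact congrArg Multiset.prod (Multiset.map_congr rfl fun x _ => by
      simp [Function.comp_def, sub_neg_eq_add])
  rw [h, roots_multiset_prod_X_sub_C]

lemma iter_deriv_facts (p : ℝ[X]) (hp0 : p ≠ 0) (hrr : Multiset.card p.roots = p.natDegree) :
    ∀ j, j ≤ p.natDegree →
      derivative^[j] p ≠ 0 ∧ (derivative^[j] p).natDegree = p.natDegree - j ∧
        Multiset.card (derivative^[j] p).roots = p.natDegree - j := by
  intro j
  induction j with
  | zero => exact fun _ => ⟨hp0, by simp, by simp [hrr]⟩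
  | succ j ih =>
    intro hj
    obtain ⟨h0, hdeg, hroots⟩ := ih (Nat.le_of_succ_le hj)
    set g := derivative^[j] p with hg
    have hgd : 1 ≤ g.natDegree := by omega
    have hd0 : derivative g ≠ 0 := by
      intro h
      have := eq_C_of_derivative_eq_zero h
      rw [this, natDegree_C] at hgd
      omega
    have hstep := card_roots_le_derivative g
    have h1 := card_roots' (derivative g)
    have h2 := natDegree_derivative_le g
    rw [Function.iterate_succ_apply', ← hg]
    exact ⟨hd0, by omega, by omega⟩

lemma iter_deriv_coeff (p : ℝ[X]) (j t : ℕ) :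
    (derivative^[j] p).coeff t = (j.factorial : ℝ) * ((t + j).choose j : ℝ) * p.coeff (t + j) := by
  have h := congrFun (factorial_smul_hasseDeriv (R := ℝ) j) p
  rw [← h, LinearMap.smul_apply, coeff_smul, hasseDeriv_coeff, nsmul_eq_mul]
  ring

lemma core (s : Multiset ℝ) (r : ℕ) (hr : r + 1 ≤ Multiset.card s)
    (hnn : ∀ p, p ≤ r → 0 ≤ s.esymm p) (h0 : s.esymm r = 0) : s.esymm (r + 1) ≤ 0 := by
  by_contra hcon
  push_neg at hcon
  set m := Multiset.card s with hm
  have hq0 : mpoly s ≠ 0 := (mpoly_monic s).ne_zero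
  have hqd : (mpoly s).natDegree = m := mpoly_natDegree s
  have hqr : Multiset.card (mpoly s).roots = (mpoly s).natDegree := by
    rw [mpoly_roots, Multiset.card_map, hqd]
  obtain ⟨hP0, hPdeg, hProots⟩ := iter_deriv_facts (mpoly s) hq0 hqr (m - (r+1)) (by omega)
  set j := m - (r + 1) with hjdef
  set P := derivative^[j] (mpoly s) with hP
  have hPd : P.natDegree = r + 1 := by rw [hPdeg, hqd]; omega
  have hPr : Multiset.card P.roots = r + 1 := by rw [hProots, hqd]; omega
  have hcoeff : ∀ t, t ≤ r + 1 → P.coeff t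
      = (j.factorial : ℝ) * ((t + j).choose j : ℝ) * s.esymm (r + 1 - t) := by
    intro t ht
    rw [hP, iter_deriv_coeff, mpoly_coeff s (by omega : t + j ≤ Multiset.card s)]
    have he : Multiset.card s - (t + j) = r + 1 - t := by omega
    rw [he]
  have hfac : (0:ℝ) < (j.factorial : ℝ) := by
    exact_mod_cast Nat.factorial_pos j
  have hch : ∀ t : ℕ, (0:ℝ) < ((t + j).choose j : ℝ) := fun t => by
    exact_mod_cast Nat.choose_pos (Nat.le_add_left j t)
  have hcnn : ∀ t, 0 ≤ P.coeff t := by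
    intro t
    rcases le_or_gt t (r+1) with ht | ht
    · rw [hcoeff t ht]
      have h1 : 0 ≤ s.esymm (r + 1 - t) := by
        rcases Nat.eq_zero_or_pos t with rfl | htpos
        · simpa using hcon.le
        · exact hnn _ (by omega)
      exact mul_nonneg (mul_nonneg hfac.le (hch t).le) h1
    · exact le_of_eq (coeff_eq_zero_of_natDegree_lt (by omega)).symm
  have hc0 : 0 < P.coeff 0 := by
    rw [hcoeff 0 (by omega)]
    have : r + 1 - 0 = r + 1 := rfl
    rw [this]
    exact mul_pos (mul_pos hfac (hch 0)) hcon
  have hc1 : P.coeff 1 = 0 := by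
    rw [hcoeff 1 (by omega)]
    have he : r + 1 - 1 = r := by omega
    rw [he, h0, mul_zero]
  have hevalpos : ∀ x : ℝ, 0 ≤ x → 0 < P.eval x := by
    intro x hx
    rw [eval_eq_sum_range' (n := r + 2) (by omega)]
    apply Finset.sum_pos'
    · intro i _
      exact mul_nonneg (hcnn i) (pow_nonneg hx i)
    · exact ⟨0, Finset.mem_range.mpr (by omega), by simpa using hc0⟩
  have hrootsneg : ∀ x ∈ P.roots, x < 0 := by
    intro x hx
    by_contra hxn
    push_neg at hxn
    have hroot := (mem_roots hP0).mp hx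
    exact (hevalpos x hxn).ne' hroot
  have hfact := C_leadingCoeff_mul_prod_multiset_X_sub_C (p := P) (by rw [hPr, hPd])
  have hlead : 0 < P.leadingCoeff := by
    rw [Polynomial.leadingCoeff, hPd, hcoeff (r+1) le_rfl]
    have he : r + 1 - (r + 1) = 0 := by omega
    rw [he, esymm_zero', mul_one]
    exact mul_pos hfac (hch _)
  have hco1 : P.coeff 1 = P.leadingCoeff * ((-1:ℝ)^r * P.roots.esymm r) := by
    conv_lhs => rw [← hfact]
    have h1c : 1 ≤ Multiset.card P.roots := by rw [hPr]; omega
    rw [coeff_C_mul, Multiset.prod_X_sub_C_coeff P.roots h1c, hPr]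
    norm_num
  have hesympos : 0 < (-1:ℝ)^r * P.roots.esymm r := by
    rw [Multiset.esymm, ← Multiset.sum_map_mul_left]
    apply multiset_sum_pos
    · intro x hx
      obtain ⟨t, ht, rfl⟩ := Multiset.mem_map.mp hx
      obtain ⟨hle, hcard⟩ := Multiset.mem_powersetCard.mp ht
      have hprod : (-1:ℝ)^r * t.prod = (t.map (fun y => -y)).prod := by
        rw [Multiset.prod_map_neg, hcard]
      rw [hprod]
      apply Multiset.prod_pos
      intro a ha
      obtain ⟨y, hy, rfl⟩ := Multiset.mem_map.mp ha
      exact neg_pos.mpr (hrootsneg y (Multiset.mem_of_le hle hy))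
    · intro hzero
      have h1 := congrArg Multiset.card hzero
      simp only [Multiset.card_map, Multiset.card_powersetCard, Multiset.card_zero, hPr] at h1
      exact (Nat.choose_pos (by omega : r ≤ r + 1)).ne' h1
  have hgt : 0 < P.coeff 1 := hco1 ▸ mul_pos hlead hesympos
  rw [hc1] at hgt
  exact lt_irrefl 0 hgt

lemma chain (s : Multiset ℝ) (r : ℕ) (h0 : s.esymm r = 0) :
    ∀ p, r ≤ p → p ≤ Multiset.card s → (∀ q, q < p → 0 ≤ s.esymm q) → s.esymm p ≤ 0 := by
  intro p
  induction p with
  | zero =>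
    intro hrp _ _
    have hr0 : r = 0 := Nat.le_zero.mp hrp
    rw [← hr0]
    exact le_of_eq h0
  | succ p ih =>
    intro hrp hpm hnn
    rcases Nat.lt_or_ge r (p+1) with hlt | hge
    · -- r ≤ p
      have hple : s.esymm p = 0 := le_antisymm
        (ih (by omega) (by omega) (fun q hq => hnn q (by omega)))
        (hnn p (by omega))
      exact core s p hpm (fun q hq => hnn q (by omega)) hple
    · have : r = p + 1 := by omega
      rw [← this, h0]

lemma mpoly_def (s : Multiset ℝ) : mpoly s = (s.map fun r => X + C r).prod := rfl

lemma taylor_mpoly (s : Multiset ℝ) (t : ℝ) :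
    taylor t (mpoly s) = mpoly (s.map (fun x => x + t)) := by
  rw [mpoly_def, mpoly_def, Multiset.map_map]
  induction s using Multiset.induction with
  | empty => simp
  | cons a u ih =>
    simp only [Multiset.map_cons, Multiset.prod_cons]
    rw [taylor_mul, ih]
    congr 1
    simp only [Function.comp_apply]
    rw [map_add, taylor_X, taylor_C, map_add, add_assoc, add_comm (C t) (C a)]

lemma esymm_shift (s : Multiset ℝ) (p : ℕ) (hp : p ≤ Multiset.card s) (t : ℝ) :
    (s.map (fun x => x + t)).esymm p =
      ∑ u ∈ Finset.range (p + 1),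
        ((u + (Multiset.card s - p)).choose (Multiset.card s - p) : ℝ)
          * s.esymm (p - u) * t ^ u := by
  have hcard : Multiset.card (s.map (fun x => x + t)) = Multiset.card s := Multiset.card_map _ _
  have h1 : (s.map (fun x => x + t)).esymm p
      = (mpoly (s.map (fun x => x + t))).coeff (Multiset.card s - p) := by
    rw [mpoly_coeff _ (by rw [hcard]; omega), hcard]
    congr 1
    omega
  rw [h1, ← taylor_mpoly, taylor_coeff]
  rw [eval_eq_sum_range' (n := p + 1)
    (lt_of_le_of_lt ((natDegree_hasseDeriv_le _ _).trans (by rw [mpoly_natDegree]; omega)) (Nat.lt_succ_self p))]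
  apply Finset.sum_congr rfl
  intro u hu
  rw [Finset.mem_range] at hu
  rw [hasseDeriv_coeff, mpoly_coeff s (by omega : u + (Multiset.card s - p) ≤ Multiset.card s)]
  have he : Multiset.card s - (u + (Multiset.card s - p)) = p - u := by omega
  rw [he]

lemma esymm_shift_pos (s : Multiset ℝ) (p : ℕ) (hp : p ≤ Multiset.card s) (t : ℝ) (ht : 0 ≤ t)
    (hnn : ∀ q, q ≤ p → 0 ≤ s.esymm q) (h0 : 0 < s.esymm p) :
    0 < (s.map (fun x => x + t)).esymm p := by
  rw [esymm_shift s p hp t]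
  apply Finset.sum_pos'
  · intro u hu
    rw [Finset.mem_range] at hu
    apply mul_nonneg (mul_nonneg (by positivity) (hnn _ (by omega)))
    exact pow_nonneg ht u
  · refine ⟨0, Finset.mem_range.mpr (by omega), ?_⟩
    simp [Nat.choose_self, h0]

noncomputable def esymmE (n : ℕ) (i : Fin n) (p : ℕ) (l : Fin n → ℝ) : ℝ :=
  ∑ s ∈ Finset.powersetCard p (Finset.univ.erase i), ∏ j ∈ s, l j

def msFull {n : ℕ} (l : Fin n → ℝ) : Multiset ℝ := Finset.univ.val.map l

def msErase {n : ℕ} (i : Fin n) (l : Fin n → ℝ) : Multiset ℝ := (Finset.univ.erase i).val.map l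

lemma card_msFull {n : ℕ} (l : Fin n → ℝ) : Multiset.card (msFull l) = n := by
  simp [msFull]

lemma card_msErase {n : ℕ} (i : Fin n) (l : Fin n → ℝ) : Multiset.card (msErase i l) = n - 1 := by
  simp [msErase, Finset.card_erase_of_mem]

lemma esymm_eq (n k : ℕ) (l : Fin n → ℝ) : esymm n k l = (msFull l).esymm k :=
  (Finset.esymm_map_val l Finset.univ k).symm

lemma esymmE_eq (n : ℕ) (i : Fin n) (p : ℕ) (l : Fin n → ℝ) :
    esymmE n i p l = (msErase i l).esymm p :=
  (Finset.esymm_map_val l (Finset.univ.erase i) p).symm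

lemma msFull_eq {n : ℕ} (i : Fin n) (l : Fin n → ℝ) : msFull l = l i ::ₘ msErase i l := by
  rw [msFull, msErase, Finset.erase_val]
  conv_lhs => rw [← Multiset.cons_erase (show i ∈ Finset.univ.val by simp)]
  rw [Multiset.map_cons]

lemma esymm_decomp {n : ℕ} (p : ℕ) (i : Fin n) (l : Fin n → ℝ) :
    esymm n (p + 1) l = (msErase i l).esymm (p + 1) + l i * (msErase i l).esymm p := by
  rw [esymm_eq, msFull_eq i l, esymm_cons]

lemma continuous_esymm (n k : ℕ) : Continuous (esymm n k) := by
  unfold esymm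
  exact continuous_finset_sum _ fun s _ =>
    continuous_finset_prod _ fun j _ => continuous_apply j

lemma continuous_esymmE (n : ℕ) (i : Fin n) (p : ℕ) : Continuous (esymmE n i p) := by
  unfold esymmE
  exact continuous_finset_sum _ fun s _ =>
    continuous_finset_prod _ fun j _ => continuous_apply j

def H (n k : ℕ) : Set (Fin n → ℝ) :=
  {l | (∀ p, 1 ≤ p → p ≤ k → 0 < esymm n p l) ∧
       ∀ i : Fin n, ∀ p, 1 ≤ p → p ≤ k - 1 → 0 < esymmE n i p l}

lemma ones_mem (n k : ℕ) (hk : k ≤ n) : (fun _ => (1:ℝ)) ∈ H n k := by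
  constructor
  · intro p _ hpk
    rw [esymm_eq]
    apply esymm_pos
    · intro x hx
      obtain ⟨j, _, rfl⟩ := Multiset.mem_map.mp hx
      norm_num
    · rw [card_msFull]; omega
  · intro i p hp1 hpk
    rw [esymmE_eq]
    apply esymm_pos
    · intro x hx
      obtain ⟨j, _, rfl⟩ := Multiset.mem_map.mp hx
      norm_num
    · rw [card_msErase]; omega

lemma H_open (n k : ℕ) : IsOpen (H n k) := by
  have h1 : H n k = (⋂ p ∈ Set.Icc 1 k, {l | 0 < esymm n p l}) ∩
      ⋂ (i : Fin n), ⋂ p ∈ Set.Icc 1 (k-1), {l | 0 < esymmE n i p l} := by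
    ext l
    simp only [H, Set.mem_inter_iff, Set.mem_iInter, Set.mem_Icc, Set.mem_setOf_eq, and_imp]
  rw [h1]
  apply IsOpen.inter
  · exact (Set.finite_Icc 1 k).isOpen_biInter fun p _ =>
      isOpen_lt continuous_const (continuous_esymm n p)
  · exact isOpen_iInter_of_finite fun i =>
      (Set.finite_Icc 1 (k-1)).isOpen_biInter fun p _ =>
        isOpen_lt continuous_const (continuous_esymmE n i p)

lemma msFull_shift {n : ℕ} (l : Fin n → ℝ) (t : ℝ) :
    msFull (fun j => l j + t) = (msFull l).map (fun x => x + t) := by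
  simp [msFull, Multiset.map_map, Function.comp_def]

lemma msErase_shift {n : ℕ} (i : Fin n) (l : Fin n → ℝ) (t : ℝ) :
    msErase i (fun j => l j + t) = (msErase i l).map (fun x => x + t) := by
  simp [msErase, Multiset.map_map, Function.comp_def]

lemma H_shift {n k : ℕ} (hk : k ≤ n) {l : Fin n → ℝ} (hl : l ∈ H n k) {t : ℝ} (ht : 0 ≤ t) :
    (fun j => l j + t) ∈ H n k := by
  constructor
  · intro p hp1 hpk
    rw [esymm_eq, msFull_shift]
    apply esymm_shift_pos _ _ (by rw [card_msFull]; omega) t ht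
    · intro q hq
      rcases Nat.eq_zero_or_pos q with rfl | hq1
      · rw [esymm_zero']; norm_num
      · rw [← esymm_eq]; exact (hl.1 q hq1 (le_trans hq hpk)).le
    · rw [← esymm_eq]; exact hl.1 p hp1 hpk
  · intro i p hp1 hpk
    rw [esymmE_eq, msErase_shift]
    apply esymm_shift_pos _ _ (by rw [card_msErase]; omega) t ht
    · intro q hq
      rcases Nat.eq_zero_or_pos q with rfl | hq1
      · rw [esymm_zero']; norm_num
      · rw [← esymmE_eq]; exact (hl.2 i q hq1 (le_trans hq hpk)).le
    · rw [← esymmE_eq]; exact hl.2 i p hp1 hpk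

lemma orthant_mem {n k : ℕ} (hk : k ≤ n) {l : Fin n → ℝ} (hl : ∀ j, 0 < l j) : l ∈ H n k := by
  constructor
  · intro p _ hpk
    rw [esymm_eq]
    apply esymm_pos
    · intro x hx
      obtain ⟨j, _, rfl⟩ := Multiset.mem_map.mp hx
      exact hl j
    · rw [card_msFull]; omega
  · intro i p _ hpk
    rw [esymmE_eq]
    apply esymm_pos
    · intro x hx
      obtain ⟨j, _, rfl⟩ := Multiset.mem_map.mp hx
      exact hl j
    · rw [card_msErase]; omega

lemma H_preconnected (n k : ℕ) (hk : k ≤ n) : IsPreconnected (H n k) := by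
  apply isPreconnected_of_forall (fun _ => (1:ℝ))
  intro l hl
  set T : ℝ := ‖l‖ + 1 with hT
  have hT0 : 0 ≤ T := by positivity
  have hz : ∀ j, 1 ≤ l j + T := by
    intro j
    have h1 : |l j| ≤ ‖l‖ := by
      have := norm_le_pi_norm l j
      rwa [Real.norm_eq_abs] at this
    have := abs_le.mp h1
    simp only [hT]
    linarith [this.1]
  refine ⟨((fun c : ℝ => fun j => l j + c) '' Set.Icc 0 T) ∪
      segment ℝ (fun j => l j + T) (fun _ => 1), ?_, ?_, ?_, ?_⟩
  · rintro x (⟨c, hc, rfl⟩ | hx)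
    · exact H_shift hk hl hc.1
    · obtain ⟨a, b, ha, hb, hab, rfl⟩ := hx
      apply orthant_mem hk
      intro j
      simp only [Pi.add_apply, Pi.smul_apply, smul_eq_mul]
      have h2 : a * 1 ≤ a * (l j + T) := mul_le_mul_of_nonneg_left (hz j) ha
      nlinarith
  · exact Or.inr (right_mem_segment ℝ _ _)
  · refine Or.inl ⟨0, ⟨le_rfl, hT0⟩, ?_⟩
    funext j
    simp
  · apply IsPreconnected.union (fun j => l j + T)
    · exact ⟨T, ⟨hT0, le_rfl⟩, rfl⟩
    · exact left_mem_segment ℝ _ _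
    · exact IsPreconnected.image isPreconnected_Icc _
        (Continuous.continuousOn (by continuity))
    · exact (convex_segment _ _).isPreconnected

lemma closure_key {n k : ℕ} (hk1 : 1 ≤ k) (hk : k ≤ n) {l : Fin n → ℝ}
    (hσk : 0 < esymm n k l) (hcl : l ∈ closure (H n k)) : l ∈ H n k := by
  have hnnF : ∀ p, 1 ≤ p → p ≤ k → 0 ≤ esymm n p l := by
    intro p hp1 hpk
    have hsub : H n k ⊆ {x | 0 ≤ esymm n p x} := fun x hx => (hx.1 p hp1 hpk).le
    exact closure_minimal hsub (isClosed_le continuous_const (continuous_esymm n p)) hcl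
  have hnnE : ∀ (i : Fin n), ∀ p, 1 ≤ p → p ≤ k - 1 → 0 ≤ esymmE n i p l := by
    intro i p hp1 hpk
    have hsub : H n k ⊆ {x | 0 ≤ esymmE n i p x} := fun x hx => (hx.2 i p hp1 hpk).le
    exact closure_minimal hsub (isClosed_le continuous_const (continuous_esymmE n i p)) hcl
  have hnnF' : ∀ q, q < k → 0 ≤ (msFull l).esymm q := by
    intro q hq
    rcases Nat.eq_zero_or_pos q with rfl | h
    · rw [esymm_zero']; norm_num
    · rw [← esymm_eq]; exact hnnF q h (by omega)
  constructor
  · intro p hp1 hpk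
    by_contra hle
    push_neg at hle
    have h0 : (msFull l).esymm p = 0 := by
      have h1 : 0 ≤ (msFull l).esymm p := by rw [← esymm_eq]; exact hnnF p hp1 hpk
      have h2 : (msFull l).esymm p ≤ 0 := by rw [← esymm_eq]; exact hle
      linarith
    rcases Nat.eq_or_lt_of_le hpk with rfl | hplt
    · rw [esymm_eq, h0] at hσk; exact lt_irrefl 0 hσk
    · have hc := chain (msFull l) p h0 k (by omega) (by rw [card_msFull]; omega) hnnF'
      rw [← esymm_eq] at hc
      linarith
  · intro i p hp1 hpk
    by_contra hle
    push_neg at hle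
    have hnnE' : ∀ q, q < k → 0 ≤ (msErase i l).esymm q := by
      intro q hq
      rcases Nat.eq_zero_or_pos q with rfl | h
      · rw [esymm_zero']; norm_num
      · rw [← esymmE_eq]; exact hnnE i q h (by omega)
    have h0 : (msErase i l).esymm p = 0 := by
      have h1 : 0 ≤ (msErase i l).esymm p := by rw [← esymmE_eq]; exact hnnE i p hp1 hpk
      have h2 : (msErase i l).esymm p ≤ 0 := by rw [← esymmE_eq]; exact hle
      linarith
    have hk1' : (msErase i l).esymm (k-1) = 0 := by
      have hle1 := chain (msErase i l) p h0 (k-1) (by omega) (by rw [card_msErase]; omega)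
        (fun q hq => hnnE' q (by omega))
      exact le_antisymm hle1 (hnnE' (k-1) (by omega))
    have hkk : (msErase i l).esymm k ≤ 0 := by
      rcases lt_or_ge (n-1) k with hbig | hsmall
      · rw [esymm_of_card_lt (by rw [card_msErase]; omega)]
      · exact chain (msErase i l) p h0 k (by omega) (by rw [card_msErase]; omega) hnnE'
    have hdec := esymm_decomp (k-1) i l
    have hkeq : k - 1 + 1 = k := by omega
    rw [hkeq] at hdec
    rw [hdec, hk1', mul_zero, add_zero] at hσk
    linarith

lemma garding_subset {n k : ℕ} (hk1 : 1 ≤ k) (hk : k ≤ n) : gardingCone n k ⊆ H n k := by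
  unfold gardingCone
  have h1Ω : (fun _ => (1:ℝ)) ∈ {l : Fin n → ℝ | 0 < esymm n k l} :=
    (ones_mem n k hk).1 k hk1 le_rfl
  apply isPreconnected_connectedComponentIn.subset_left_of_subset_union
    (H_open n k) (isOpen_compl_iff.mpr isClosed_closure)
  · exact Set.disjoint_left.mpr fun x hx hxc => hxc (subset_closure hx)
  · intro l hl
    by_cases hcl : l ∈ closure (H n k)
    · exact Or.inl (closure_key hk1 hk
        (connectedComponentIn_subset {l : Fin n → ℝ | 0 < esymm n k l} (fun _ => 1) hl) hcl)
    · exact Or.inr hcl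
  · exact ⟨fun _ => 1, mem_connectedComponentIn h1Ω, ones_mem n k hk⟩

lemma newton_eq_diag {n : ℕ} {A U : Matrix (Fin n) (Fin n) ℝ} (hUU : U * star U = 1)
    (hU'U : star U * U = 1) {lam : Fin n → ℝ} (hspec : A = U * Matrix.diagonal lam * star U)
    (σ : ℕ → ℝ) (g : ℕ → Fin n → ℝ) (hg0 : ∀ i, g 0 i = 1)
    (hgs : ∀ m i, g (m + 1) i = σ (m + 1) - lam i * g m i) :
    ∀ m, newton A σ m = U * Matrix.diagonal (g m) * star U := by
  intro m
  induction m with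
  | zero =>
    have h1 : g 0 = fun _ : Fin n => (1:ℝ) := funext fun i => hg0 i
    rw [newton, h1, Matrix.diagonal_one, Matrix.mul_one, hUU]
  | succ m ih =>
    have hcancel : ∀ X : Matrix (Fin n) (Fin n) ℝ, star U * (U * X) = X := by
      intro X
      rw [← Matrix.mul_assoc, hU'U, Matrix.one_mul]
    have h1 : A * (U * Matrix.diagonal (g m) * star U)
        = U * Matrix.diagonal (fun i => lam i * g m i) * star U := by
      rw [hspec]
      rw [Matrix.mul_assoc (U * Matrix.diagonal lam) (star U) _]
      rw [Matrix.mul_assoc U (Matrix.diagonal (g m)) (star U)]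
      rw [hcancel]
      rw [← Matrix.mul_assoc (U * Matrix.diagonal lam) (Matrix.diagonal (g m)) (star U)]
      rw [Matrix.mul_assoc U (Matrix.diagonal lam) (Matrix.diagonal (g m))]
      rw [Matrix.diagonal_mul_diagonal]
    have h2 : σ (m + 1) • (1 : Matrix (Fin n) (Fin n) ℝ)
        = U * Matrix.diagonal (fun _ => σ (m + 1)) * star U := by
      rw [← Matrix.smul_one_eq_diagonal]
      rw [mul_smul_comm, Matrix.mul_one, smul_mul_assoc, hUU]
    have h3 : Matrix.diagonal (g (m + 1))
        = Matrix.diagonal (fun _ => σ (m + 1)) - Matrix.diagonal (fun i => lam i * g m i) := by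
      ext i j
      by_cases h : i = j <;> simp [h, Matrix.diagonal_apply, hgs]
    rw [newton, ih, h1, h2, h3, mul_sub, sub_mul]

lemma posdef_conj {n : ℕ} (U : Matrix (Fin n) (Fin n) ℝ) (hUU : U * star U = 1)
    (d : Fin n → ℝ) (hd : ∀ i, 0 < d i) : (U * Matrix.diagonal d * star U).PosDef := by
  rw [Matrix.posDef_iff_dotProduct_mulVec]
  constructor
  · show (U * Matrix.diagonal d * star U)ᴴ = _
    rw [Matrix.star_eq_conjTranspose, conjTranspose_mul, conjTranspose_mul,
      diagonal_conjTranspose, conjTranspose_conjTranspose]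
    have hsd : star d = d := by funext i; simp
    rw [hsd, Matrix.mul_assoc]
  · intro x hx
    set y : Fin n → ℝ := star U *ᵥ x with hy
    have hy0 : y ≠ 0 := by
      intro h
      have h2 : U *ᵥ y = 0 := by rw [h, Matrix.mulVec_zero]
      rw [hy, Matrix.mulVec_mulVec, hUU, Matrix.one_mulVec] at h2
      exact hx h2
    have hvm : x ᵥ* U = y := by
      funext j
      simp only [hy, Matrix.vecMul, Matrix.mulVec, dotProduct,
        Matrix.star_eq_conjTranspose, Matrix.conjTranspose_apply, star_trivial]
      exact Finset.sum_congr rfl fun i _ => mul_comm _ _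
    have hcalc : dotProduct (star x) ((U * Matrix.diagonal d * star U) *ᵥ x)
        = ∑ i, d i * (y i * y i) := by
      rw [star_trivial, ← Matrix.mulVec_mulVec, ← Matrix.mulVec_mulVec,
        Matrix.dotProduct_mulVec, hvm, ← hy]
      unfold dotProduct
      refine Finset.sum_congr rfl fun i _ => ?_
      rw [Matrix.mulVec_diagonal]
      ring
    rw [hcalc]
    obtain ⟨i0, hi0⟩ := Function.ne_iff.mp hy0
    apply Finset.sum_pos'
    · intro i _
      exact mul_nonneg (hd i).le (mul_self_nonneg _)
    · refine ⟨i0, Finset.mem_univ _, ?_⟩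
      have : y i0 ≠ 0 := by simpa using hi0
      exact mul_pos (hd i0) (mul_self_pos.mpr this)


end GardingAux

/-- If the vector of eigenvalues of a real symmetric matrix `A` lies in the Gårding
cone `Γ_k`, then the Newton transformation `P_{k-1}(A)` is positive definite
(ellipticity of `L_{k-1}`). -/
theorem newton_posDef_of_garding {n : ℕ} (hn : 1 ≤ n) (k : ℕ) (hk1 : 1 ≤ k) (hk : k ≤ n)
    (A : Matrix (Fin n) (Fin n) ℝ) (hA : A.IsHermitian)
    (hl : hA.eigenvalues ∈ gardingCone n k) :
    (newton A (fun j => esymm n j hA.eigenvalues) (k - 1)).PosDef := by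
  classical
  set lam := hA.eigenvalues with hlam
  have hH := GardingAux.garding_subset hk1 hk hl
  set U : Matrix (Fin n) (Fin n) ℝ :=
    (Matrix.IsHermitian.eigenvectorUnitary hA : Matrix (Fin n) (Fin n) ℝ) with hU
  have hUU : U * star U = 1 :=
    (Matrix.mem_unitaryGroup_iff).mp (Matrix.IsHermitian.eigenvectorUnitary hA).2
  have hU'U : star U * U = 1 :=
    (Matrix.mem_unitaryGroup_iff').mp (Matrix.IsHermitian.eigenvectorUnitary hA).2
  have hspec : A = U * Matrix.diagonal lam * star U := by
    have h := hA.spectral_theorem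
    rwa [RCLike.ofReal_real_eq_id, Function.id_comp] at h
  set g : ℕ → Fin n → ℝ := fun m i => GardingAux.esymmE n i m lam with hg
  have hg0 : ∀ i, g 0 i = 1 := by
    intro i
    simp [hg, GardingAux.esymmE, Finset.powersetCard_zero]
  have hgs : ∀ m i, g (m + 1) i = esymm n (m + 1) lam - lam i * g m i := by
    intro m i
    have hd := GardingAux.esymm_decomp m i lam
    rw [← GardingAux.esymmE_eq, ← GardingAux.esymmE_eq] at hd
    simp only [hg]
    linarith
  have hnew := GardingAux.newton_eq_diag hUU hU'U hspec
    (fun j => esymm n j lam) g hg0 hgs (k - 1)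
  rw [hnew]
  apply GardingAux.posdef_conj U hUU
  intro i
  rcases Nat.eq_zero_or_pos (k - 1) with h0 | hpos
  · rw [h0]
    rw [hg0 i]
    norm_num
  · exact hH.2 i (k - 1) hpos le_rfl
end
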